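/- arXiv:1904.06144 — 3 statements merged into one kernel-verified Lean document; each statement's English description precedes it below -/
import Mathlib

section
/- Let R be a stochastic matrix on a countable state space S with stationary distribution π that is uniformly ergodic with constants C > 0 and ρ ∈ (0,1), i.e. |R^n(u,v) − π_v| ≤ C ρ^n for all n ≥ 1 and u,v ∈ S. Then for every probability distribution μ on S, every v ∈ S, and all integers a, b ≥ 1, the 'covariance along two branches' satisfies |Σ_{s∈S} μ(s) R^a(s,v) R^b(s,v) − (μR^a)(v) · (μR^b)(v)| ≤ 2C ρ^{max(a,b)} ≤ 2C ρ^{(a+b)/2}. -/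
open MeasureTheory ProbabilityTheory Filter Topology
set_option maxHeartbeats 1000000

/-- The `n`-step transition matrix `R^n` of a Markov kernel `R` on the countable
state space `S` (matrix powers, with sums as `tsum` over `S`). -/
noncomputable def matPow {S : Type*} [DecidableEq S] (R : S → S → ℝ) : ℕ → S → S → ℝ
  | 0 => fun u v => if u = v then 1 else 0
  | n + 1 => fun u v => ∑' s, matPow R n u s * R s v

lemma matPow_nonneg {S : Type*} [DecidableEq S] (R : S → S → ℝ)
    (hRnonneg : ∀ u v, 0 ≤ R u v) : ∀ n u v, 0 ≤ matPow R n u v := by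
  intro n
  induction n with
  | zero => intro u v; simp [matPow]; split <;> norm_num
  | succ n ih =>
    intro u v
    exact tsum_nonneg fun s => mul_nonneg (ih u s) (hRnonneg s v)

lemma matPow_row {S : Type*} [Countable S] [DecidableEq S] (R : S → S → ℝ)
    (hRnonneg : ∀ u v, 0 ≤ R u v) (hRrow : ∀ u, HasSum (R u) 1) :
    ∀ n u, HasSum (matPow R n u) 1 := by
  intro n
  induction n with
  | zero =>
    intro u
    have : (matPow R 0 u) = fun v => if v = u then (1:ℝ) else 0 := by
      funext v; simp [matPow, eq_comm]
    rw [this]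
    exact hasSum_ite_eq u 1
  | succ n ih =>
    intro u
    set p := matPow R n u with hp
    have hp0 : ∀ s, 0 ≤ p s := fun s => matPow_nonneg R hRnonneg n u s
    have hps : Summable p := (ih u).summable
    -- summability on the product
    have hslice : ∀ s, Summable (fun w => p s * R s w) :=
      fun s => (hRrow s).summable.mul_left _
    have hmarg : Summable (fun s => ∑' w, p s * R s w) := by
      have : (fun s => ∑' w, p s * R s w) = p := by
        funext s
        rw [tsum_mul_left, (hRrow s).tsum_eq, mul_one]
      rw [this]; exact hps
    have hprodnn : ∀ q : S × S, 0 ≤ p q.1 * R q.1 q.2 :=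
      fun q => mul_nonneg (hp0 _) (hRnonneg _ _)
    have hprod : Summable (Function.uncurry fun s w => p s * R s w) :=
      (summable_prod_of_nonneg hprodnn).2 ⟨hslice, hmarg⟩
    have hswap : ∀ w, Summable (fun s => p s * R s w) := by
      intro w
      apply Summable.of_nonneg_of_le (fun s => mul_nonneg (hp0 s) (hRnonneg s w))
        (fun s => ?_) hps
      have hR1 : R s w ≤ 1 := le_hasSum (hRrow s) w (fun _ _ => hRnonneg s _)
      nlinarith [hp0 s]
    have hsum2 : Summable (fun w => ∑' s, p s * R s w) := by
      have hswapped : Summable (fun q : S × S => p q.2 * R q.2 q.1) :=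
        (Equiv.prodComm S S).summable_iff.2 hprod
      exact ((summable_prod_of_nonneg
        (fun q => mul_nonneg (hp0 _) (hRnonneg _ _))).1 hswapped).2
    have hval : ∑' w, ∑' s, p s * R s w = 1 := by
      rw [Summable.tsum_comm' hprod hslice hswap]
      calc ∑' s, ∑' w, p s * R s w = ∑' s, p s := by
            congr 1; funext s; rw [tsum_mul_left, (hRrow s).tsum_eq, mul_one]
        _ = 1 := (ih u).tsum_eq
    have : matPow R (n+1) u = fun w => ∑' s, p s * R s w := by
      funext w; simp [matPow, hp]
    rw [this]
    exact hval ▸ hsum2.hasSum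

lemma cov_bound {S : Type*} (μd A B : S → ℝ) (hμ0 : ∀ s, 0 ≤ μd s)
    (hμ1 : HasSum μd 1) (hA0 : ∀ s, 0 ≤ A s) (hA1 : ∀ s, A s ≤ 1)
    (c ε : ℝ) (hε : 0 ≤ ε) (hB : ∀ s, |B s - c| ≤ ε) :
    |(∑' s, μd s * (A s * B s)) - (∑' s, μd s * A s) * (∑' s, μd s * B s)| ≤ 2 * ε := by
  have hμs : Summable μd := hμ1.summable
  have hBabs : ∀ s, |B s| ≤ |c| + ε := by
    intro s
    have := hB s
    have := abs_sub_abs_le_abs_sub (B s) c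
    linarith
  have SA : Summable (fun s => μd s * A s) := by
    apply Summable.of_nonneg_of_le (fun s => mul_nonneg (hμ0 s) (hA0 s))
      (fun s => ?_) hμs
    nlinarith [hμ0 s, hA0 s, hA1 s]
  have SB : Summable (fun s => μd s * B s) := by
    rw [← summable_abs_iff]
    apply Summable.of_nonneg_of_le (fun s => abs_nonneg _) (fun s => ?_)
      (hμs.mul_right (|c| + ε))
    rw [abs_mul, abs_of_nonneg (hμ0 s)]
    exact mul_le_mul_of_nonneg_left (hBabs s) (hμ0 s)
  have SAB : Summable (fun s => μd s * (A s * B s)) := by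
    rw [← summable_abs_iff]
    apply Summable.of_nonneg_of_le (fun s => abs_nonneg _) (fun s => ?_)
      (hμs.mul_right (|c| + ε))
    rw [abs_mul, abs_of_nonneg (hμ0 s), abs_mul, abs_of_nonneg (hA0 s)]
    have h1 : A s * |B s| ≤ 1 * (|c| + ε) :=
      mul_le_mul (hA1 s) (hBabs s) (abs_nonneg _) zero_le_one
    nlinarith [hμ0 s]
  have SμAc : Summable (fun s => μd s * A s * c) := SA.mul_right c
  -- key bound 1 : |∑ μ A (B - c)| ≤ ε
  have habs1 : ∀ s, |μd s * A s * (B s - c)| ≤ μd s * ε := by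
    intro s
    rw [abs_mul, abs_mul, abs_of_nonneg (hμ0 s), abs_of_nonneg (hA0 s)]
    have h1 : A s * |B s - c| ≤ ε :=
      le_trans (mul_le_of_le_one_left (abs_nonneg _) (hA1 s)) (hB s)
    nlinarith [hμ0 s, mul_le_mul_of_nonneg_left h1 (hμ0 s)]
  have S1 : Summable (fun s => μd s * A s * (B s - c)) := by
    rw [← summable_abs_iff]
    exact Summable.of_nonneg_of_le (fun s => abs_nonneg _) habs1 (hμs.mul_right ε)
  have key1 : |∑' s, μd s * A s * (B s - c)| ≤ ε := by
    calc |∑' s, μd s * A s * (B s - c)| ≤ ∑' s, |μd s * A s * (B s - c)| := by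
          simpa only [Real.norm_eq_abs] using
            norm_tsum_le_tsum_norm (f := fun s => μd s * A s * (B s - c))
              (by simpa only [Real.norm_eq_abs] using (summable_abs_iff.2 S1))
      _ ≤ ∑' s, μd s * ε := Summable.tsum_le_tsum habs1
          (summable_abs_iff.2 S1) (hμs.mul_right ε)
      _ = ε := by rw [tsum_mul_right, hμ1.tsum_eq, one_mul]
  -- key bound 2 : |∑ μ (B - c)| ≤ ε
  have habs2 : ∀ s, |μd s * (B s - c)| ≤ μd s * ε := by
    intro s
    rw [abs_mul, abs_of_nonneg (hμ0 s)]
    exact mul_le_mul_of_nonneg_left (hB s) (hμ0 s)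
  have S2 : Summable (fun s => μd s * (B s - c)) := by
    rw [← summable_abs_iff]
    exact Summable.of_nonneg_of_le (fun s => abs_nonneg _) habs2 (hμs.mul_right ε)
  have key2 : |∑' s, μd s * (B s - c)| ≤ ε := by
    calc |∑' s, μd s * (B s - c)| ≤ ∑' s, |μd s * (B s - c)| := by
          simpa only [Real.norm_eq_abs] using
            norm_tsum_le_tsum_norm (f := fun s => μd s * (B s - c))
              (by simpa only [Real.norm_eq_abs] using (summable_abs_iff.2 S2))
      _ ≤ ∑' s, μd s * ε := Summable.tsum_le_tsum habs2
          (summable_abs_iff.2 S2) (hμs.mul_right ε)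
      _ = ε := by rw [tsum_mul_right, hμ1.tsum_eq, one_mul]
  -- identities
  have E1 : ∑' s, μd s * A s * (B s - c) = (∑' s, μd s * (A s * B s)) - (∑' s, μd s * A s) * c := by
    have : (fun s => μd s * A s * (B s - c))
        = fun s => μd s * (A s * B s) - μd s * A s * c := by funext s; ring
    rw [this, Summable.tsum_sub SAB SμAc, tsum_mul_right]
  have E2 : ∑' s, μd s * (B s - c) = (∑' s, μd s * B s) - c := by
    have : (fun s => μd s * (B s - c)) = fun s => μd s * B s - μd s * c := by
      funext s; ring
    rw [this, Summable.tsum_sub SB (hμs.mul_right c), tsum_mul_right, hμ1.tsum_eq, one_mul]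
  -- ∑ μ A ∈ [0,1]
  have hSA0 : 0 ≤ ∑' s, μd s * A s := tsum_nonneg fun s => mul_nonneg (hμ0 s) (hA0 s)
  have hSA1 : (∑' s, μd s * A s) ≤ 1 := by
    calc (∑' s, μd s * A s) ≤ ∑' s, μd s := Summable.tsum_le_tsum
          (fun s => by nlinarith [hμ0 s, hA1 s, hA0 s]) SA hμs
      _ = 1 := hμ1.tsum_eq
  -- assemble
  have decomp : (∑' s, μd s * (A s * B s)) - (∑' s, μd s * A s) * (∑' s, μd s * B s)
      = (∑' s, μd s * A s * (B s - c)) - (∑' s, μd s * A s) * (∑' s, μd s * (B s - c)) := by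
    rw [E1, E2]; ring
  rw [decomp]
  set X := ∑' s, μd s * A s * (B s - c) with hX
  set Y := ∑' s, μd s * A s with hY
  set Z := ∑' s, μd s * (B s - c) with hZ
  have h3 : |Y * Z| ≤ ε := by
    rw [abs_mul, abs_of_nonneg hSA0]
    calc Y * |Z| ≤ 1 * ε := mul_le_mul hSA1 key2 (abs_nonneg _) zero_le_one
      _ = ε := one_mul ε
  calc |X - Y * Z| ≤ |X| + |Y * Z| := abs_sub X (Y * Z)
    _ ≤ ε + ε := add_le_add key1 h3
    _ = 2 * ε := by ring

/-- **Lemma 3.1 (matrix form).** For a uniformly ergodic stochastic matrix `R` with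
stationary distribution `pi` and constants `C > 0`, `ρ ∈ (0,1)`, the covariance of a
branching Markov chain along two branches of lengths `a` and `b` emanating from a
common vertex with distribution `μd` is bounded by `2Cρ^{max(a,b)} ≤ 2Cρ^{(a+b)/2}`. -/
theorem branching_covariance_bound {S : Type*} [Countable S] [DecidableEq S]
    (R : S → S → ℝ) (hRnonneg : ∀ u v, 0 ≤ R u v) (hRrow : ∀ u, HasSum (R u) 1)
    (pi : S → ℝ) (hpinonneg : ∀ v, 0 ≤ pi v) (hpisum : HasSum pi 1)
    (hstationary : ∀ v, HasSum (fun s => pi s * R s v) (pi v))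
    (C ρ : ℝ) (hC : 0 < C) (hρ : ρ ∈ Set.Ioo (0 : ℝ) 1)
    (hunifErg : ∀ n : ℕ, 1 ≤ n → ∀ u v, |matPow R n u v - pi v| ≤ C * ρ ^ n)
    (μd : S → ℝ) (hμdnonneg : ∀ s, 0 ≤ μd s) (hμdsum : HasSum μd 1)
    (v : S) (a b : ℕ) (ha : 1 ≤ a) (hb : 1 ≤ b) :
    |(∑' s, μd s * (matPow R a s v * matPow R b s v)) -
        (∑' s, μd s * matPow R a s v) * (∑' s, μd s * matPow R b s v)| ≤
      2 * C * ρ ^ max a b ∧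
    2 * C * ρ ^ max a b ≤ 2 * C * ρ ^ (((a : ℝ) + b) / 2) := by
  have hpow0 : ∀ n u w, 0 ≤ matPow R n u w := matPow_nonneg R hRnonneg
  have hrow := matPow_row R hRnonneg hRrow
  have hle1 : ∀ n s, matPow R n s v ≤ 1 :=
    fun n s => le_hasSum (hrow n s) v (fun w _ => hpow0 n s w)
  constructor
  · rcases le_total a b with hab | hab
    · have hmax : max a b = b := max_eq_right hab
      rw [hmax]
      have key := cov_bound μd (fun s => matPow R a s v) (fun s => matPow R b s v)
        hμdnonneg hμdsum (fun s => hpow0 a s v) (fun s => hle1 a s) (pi v) (C * ρ ^ b)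
        (mul_nonneg hC.le (pow_nonneg hρ.1.le b)) (fun s => hunifErg b hb s v)
      calc |(∑' s, μd s * (matPow R a s v * matPow R b s v)) -
            (∑' s, μd s * matPow R a s v) * (∑' s, μd s * matPow R b s v)|
          ≤ 2 * (C * ρ ^ b) := key
        _ = 2 * C * ρ ^ b := by ring
    · have hmax : max a b = a := max_eq_left hab
      rw [hmax]
      have hfun : (fun s => μd s * (matPow R a s v * matPow R b s v))
          = fun s => μd s * (matPow R b s v * matPow R a s v) := by
        funext s; ring
      rw [hfun, mul_comm (∑' s, μd s * matPow R a s v) (∑' s, μd s * matPow R b s v)]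
      have key := cov_bound μd (fun s => matPow R b s v) (fun s => matPow R a s v)
        hμdnonneg hμdsum (fun s => hpow0 b s v) (fun s => hle1 b s) (pi v) (C * ρ ^ a)
        (mul_nonneg hC.le (pow_nonneg hρ.1.le a)) (fun s => hunifErg a ha s v)
      calc |(∑' s, μd s * (matPow R b s v * matPow R a s v)) -
            (∑' s, μd s * matPow R b s v) * (∑' s, μd s * matPow R a s v)|
          ≤ 2 * (C * ρ ^ a) := key
        _ = 2 * C * ρ ^ a := by ring
  · apply mul_le_mul_of_nonneg_left _ (by linarith : (0:ℝ) ≤ 2 * C)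
    rw [← Real.rpow_natCast ρ (max a b)]
    apply Real.rpow_le_rpow_of_exponent_ge hρ.1 hρ.2.le
    have h1 := le_max_left a b
    have h2 := le_max_right a b
    have h1' : (a : ℝ) ≤ (max a b : ℕ) := by exact_mod_cast h1
    have h2' : (b : ℝ) ≤ (max a b : ℕ) := by exact_mod_cast h2
    linarith
end

section
/- Fix t > 0 and r ∈ (0,1), and let A_n(r) := E[Σ_{u ∈ T'_n} r^{d(u)}] for the weighted random recursive tree with root weight t. Then for every n ≥ 0, A_n(r) admits the closed form A_n(r) = r Σ_{k=0}^n (t/(k+t)) ∏_{j=k+1}^n (1 + r/(j+t)) = rt Σ_{k=0}^n [Γ(n+1+t+r)/Γ(n+1+t)] · [Γ(k+t)/Γ(k+1+t+r)], where Γ is the Gamma function. -/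
open MeasureTheory ProbabilityTheory Filter Topology

instance : MeasurableSpace (Option ℕ) := ⊤

instance : MeasurableSingletonClass (Option ℕ) := ⟨fun _ => trivial⟩

/-- Depth (graph distance to the root `o`) of the vertex `w n` in the recursive tree
whose parent map is `P` : `P n = none` means the parent of `w n` is the root `o`, and
`P n = some j` (with `j < n`) means the parent of `w n` is `w j`. -/
def wrrtDepth (P : ℕ → Option ℕ) : ℕ → ℕ
  | n =>
    match P n with
    | none => 1
    | some j => if h : j < n then wrrtDepth P j + 1 else 1
termination_by n => n

/-- The parent of a vertex (`none` is the root `o`, `some n` is the vertex `w n`). -/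
def wrrtParent (P : ℕ → Option ℕ) : Option ℕ → Option ℕ
  | none => none
  | some n =>
    match P n with
    | none => none
    | some j => if j < n then some j else none

/-- Depth of a vertex of the recursive tree (`none` is the root `o`). -/
def wrrtDepthV (P : ℕ → Option ℕ) : Option ℕ → ℕ
  | none => 0
  | some n => wrrtDepth P n

def wrrtDistAux (P : ℕ → Option ℕ) : ℕ → Option ℕ → Option ℕ → ℕ
  | 0, _, _ => 0
  | fuel + 1, u, w =>
    if u = w then 0
    else if wrrtDepthV P u < wrrtDepthV P w then wrrtDistAux P fuel u (wrrtParent P w) + 1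
    else wrrtDistAux P fuel (wrrtParent P u) w + 1

/-- Graph distance `d(u,w)` between two vertices of the recursive tree with parent
map `P`: repeatedly move the deeper vertex to its parent until the two meet. -/
def wrrtDist (P : ℕ → Option ℕ) (u w : Option ℕ) : ℕ :=
  wrrtDistAux P (wrrtDepthV P u + wrrtDepthV P w) u w

/-- `A_n(r) = E [ ∑_{u ∈ T'_n} r^{d(u)} ]`, the sum over the non-root vertices
`w_0, …, w_n` of the random recursive tree with (random) parent maps `p · ω`. -/
noncomputable def wrrtA {Ω : Type*} [MeasurableSpace Ω] (μ : Measure Ω) (r : ℝ)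
    (p : ℕ → Ω → Option ℕ) (n : ℕ) : ℝ :=
  ∫ ω, (∑ u ∈ Finset.range (n + 1), r ^ wrrtDepth (fun k => p k ω) u) ∂μ

/-- `B_n(r) = E [ ∑_{u,w ∈ T'_n} r^{d(u,w)} ]`, the sum over all ordered pairs of
non-root vertices of the random recursive tree with (random) parent maps `p · ω`. -/
noncomputable def wrrtB {Ω : Type*} [MeasurableSpace Ω] (μ : Measure Ω) (r : ℝ)
    (p : ℕ → Ω → Option ℕ) (n : ℕ) : ℝ :=
  ∫ ω, (∑ u ∈ Finset.range (n + 1), ∑ w ∈ Finset.range (n + 1),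
      r ^ wrrtDist (fun k => p k ω) (some u) (some w)) ∂μ


theorem wrrtDepth_congr (P Q : ℕ → Option ℕ) : ∀ n, (∀ k, k ≤ n → P k = Q k) → wrrtDepth P n = wrrtDepth Q n := by
  intro n
  induction n using Nat.strong_induction_on with
  | _ n ih =>
    intro h
    rw [wrrtDepth, wrrtDepth, h n le_rfl]
    cases hq : Q n with
    | none => rfl
    | some j =>
      simp only
      split
      · next hj => rw [ih j hj (fun k hk => h k (hk.trans hj.le))]
      · rfl

theorem wrrtDepth_none (P : ℕ → Option ℕ) (n : ℕ) (h : P n = none) : wrrtDepth P n = 1 := by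
  rw [wrrtDepth, h]

theorem wrrtDepth_some (P : ℕ → Option ℕ) (n j : ℕ) (h : P n = some j) (hj : j < n) :
    wrrtDepth P n = wrrtDepth P j + 1 := by
  rw [wrrtDepth, h]; simp [hj]

section
variable {Ω : Type*} [MeasurableSpace Ω] (μ : Measure Ω) [IsProbabilityMeasure μ]
  (r : ℝ) (p : ℕ → Ω → Option ℕ)

theorem meas_g (hpmeas : ∀ n, Measurable (p n)) (j : ℕ) :
    Measurable (fun ω => r ^ wrrtDepth (fun k => p k ω) j) := by
  have : (fun ω => r ^ wrrtDepth (fun k => p k ω) j)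
      = (fun f : Fin (j+1) → Option ℕ => r ^ wrrtDepth (fun k => if h : k < j+1 then f ⟨k,h⟩ else none) j)
        ∘ (fun ω (i : Fin (j+1)) => p i ω) := by
    funext ω
    simp only [Function.comp_apply]
    congr 1
    apply wrrtDepth_congr
    intro k hk
    rw [dif_pos (Nat.lt_succ_of_le hk)]
  rw [this]
  exact (measurable_of_countable _).comp (measurable_pi_lambda _ fun i => hpmeas i)

theorem int_g (hpmeas : ∀ n, Measurable (p n)) (hr0 : 0 ≤ r) (hr1 : r ≤ 1) (j : ℕ) :
    Integrable (fun ω => r ^ wrrtDepth (fun k => p k ω) j) μ := by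
  apply Integrable.mono' (integrable_const (1:ℝ)) (meas_g r p hpmeas j).aestronglyMeasurable
  filter_upwards with ω
  rw [Real.norm_eq_abs, abs_of_nonneg (by positivity)]
  exact pow_le_one₀ hr0 hr1

theorem a_rec (t : ℝ) (ht : 0 < t) (hr : r ∈ Set.Ioo (0:ℝ) 1)
    (hpmeas : ∀ n, Measurable (p n))
    (hroot : ∀ n : ℕ, μ {ω | p n ω = none} = ENNReal.ofReal (t / (n + t)))
    (hparent : ∀ n : ℕ, ∀ j < n, μ {ω | p n ω = some j} = ENNReal.ofReal (1 / (n + t)))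
    (hindep : iIndepFun (m := fun _ : ℕ => (inferInstance : MeasurableSpace (Option ℕ))) p μ)
    (n : ℕ) :
    ∫ ω, r ^ wrrtDepth (fun k => p k ω) n ∂μ
      = t/((n:ℝ)+t) * r + ∑ j ∈ Finset.range n,
          (1/((n:ℝ)+t)) * (r * ∫ ω, r ^ wrrtDepth (fun k => p k ω) j ∂μ) := by
  obtain ⟨hr0, hr1⟩ := hr
  set g : ℕ → Ω → ℝ := fun j ω => r ^ wrrtDepth (fun k => p k ω) j with hg
  have hnt : (0:ℝ) < (n:ℝ) + t := by positivity
  set A0 : Set Ω := {ω | p n ω = none} with hA0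
  set A : ℕ → Set Ω := fun j => {ω | p n ω = some j} with hA
  have hA0m : MeasurableSet A0 := hpmeas n (show MeasurableSet {(none : Option ℕ)} from trivial)
  have hAm : ∀ j, MeasurableSet (A j) := fun j =>
    hpmeas n (show MeasurableSet {(some j : Option ℕ)} from trivial)
  set B : Set Ω := A0 ∪ ⋃ j ∈ Finset.range n, A j with hB
  have hBm : MeasurableSet B :=
    hA0m.union (Finset.measurableSet_biUnion _ fun j _ => hAm j)
  -- μ B = 1
  have hμB : μ B = 1 := by
    have hdisj : Disjoint A0 (⋃ j ∈ Finset.range n, A j) := by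
      rw [Set.disjoint_left]
      rintro ω h0 h1
      simp only [Set.mem_iUnion] at h1
      obtain ⟨j, _, hj⟩ := h1
      rw [Set.mem_setOf_eq] at h0 hj
      rw [h0] at hj; cases hj
    rw [hB, measure_union hdisj (Finset.measurableSet_biUnion _ fun j _ => hAm j),
      measure_biUnion_finset ?_ (fun j _ => hAm j)]
    · have hsum : ∀ j ∈ Finset.range n, μ (A j) = ENNReal.ofReal (1/((n:ℝ)+t)) := by
        intro j hj
        exact hparent n j (Finset.mem_range.mp hj)
      rw [Finset.sum_congr rfl hsum, Finset.sum_const, Finset.card_range, hroot n,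
        nsmul_eq_mul, ← ENNReal.ofReal_natCast n, ← ENNReal.ofReal_mul (Nat.cast_nonneg n),
        ← ENNReal.ofReal_add (by positivity) (by positivity)]
      rw [show t/((n:ℝ)+t) + (n:ℝ) * (1/((n:ℝ)+t)) = 1 by field_simp; ring]
      exact ENNReal.ofReal_one
    · intro i hi j hj hij
      rw [Function.onFun, Set.disjoint_left]
      intro ω h1 h2
      rw [Set.mem_setOf_eq] at h1 h2
      rw [h1] at h2
      exact hij (Option.some.inj h2)
  have hBc : μ Bᶜ = 0 := by
    rw [measure_compl hBm (measure_ne_top μ B), hμB, measure_univ, tsub_self]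
  -- pointwise identity on B
  set F : Ω → ℝ := fun ω => Set.indicator A0 (fun _ => r) ω
      + ∑ j ∈ Finset.range n, Set.indicator (A j) (fun ω' => r * g j ω') ω with hF
  have hpt : ∀ ω ∈ B, g n ω = F ω := by
    intro ω hωB
    rcases hωB with h0 | h1
    · have hp : p n ω = none := h0
      have hgr : g n ω = r := by
        rw [hg]; simp only; rw [wrrtDepth_none _ _ hp, pow_one]
      simp only [hF]
      rw [hgr, Set.indicator_of_mem h0]
      have : ∀ j ∈ Finset.range n, Set.indicator (A j) (fun ω' => r * g j ω') ω = 0 := by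
        intro j _
        apply Set.indicator_of_notMem
        intro h
        have h' : p n ω = some j := h
        rw [hp] at h'
        cases h'
      rw [Finset.sum_congr rfl this, Finset.sum_const, smul_zero, add_zero]
    · simp only [Set.mem_iUnion] at h1
      obtain ⟨j, hjr, hωj⟩ := h1
      have hjn : j < n := Finset.mem_range.mp hjr
      have hp : p n ω = some j := hωj
      have hgn : g n ω = r * g j ω := by
        rw [hg]; simp only
        rw [wrrtDepth_some _ _ _ hp hjn, pow_succ]
        ring
      simp only [hF]
      rw [hgn]
      rw [Set.indicator_of_notMem (show ω ∉ A0 by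
        intro h
        have h' : p n ω = none := h
        rw [hp] at h'; cases h')]
      rw [zero_add, Finset.sum_eq_single j]
      · rw [Set.indicator_of_mem hωj]
      · intro i _ hij
        apply Set.indicator_of_notMem
        intro h
        have h' : p n ω = some i := h
        rw [hp] at h'
        exact hij (Option.some.inj h').symm
      · intro h; exact absurd hjr h
  have hae : (fun ω => g n ω) =ᵐ[μ] F := by
    rw [Filter.EventuallyEq, ae_iff]
    apply measure_mono_null _ hBc
    intro ω hω
    rw [Set.mem_setOf_eq] at hω
    exact fun hB' => hω (hpt ω hB')
  -- integrability pieces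
  have hint0 : Integrable (Set.indicator A0 (fun _ => r)) μ :=
    (integrable_const r).indicator hA0m
  have hintj : ∀ j, Integrable (Set.indicator (A j) (fun ω' => r * g j ω')) μ := fun j =>
    ((int_g μ r p hpmeas hr0.le hr1.le j).const_mul r).indicator (hAm j)
  -- independence
  have hIfin : IndepFun (fun ω (i : (Finset.range n : Finset ℕ)) => p i ω)
      (fun ω (i : ({n} : Finset ℕ)) => p i ω) μ :=
    hindep.indepFun_finset (Finset.range n) {n}
      (Finset.disjoint_singleton_right.mpr (by simp)) hpmeas
  -- integral of each indicator term
  have hIj : ∀ j ∈ Finset.range n,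
      ∫ ω, Set.indicator (A j) (fun ω' => r * g j ω') ω ∂μ
        = (μ (A j)).toReal * (r * ∫ ω, g j ω ∂μ) := by
    intro j hjr
    have hjn : j < n := Finset.mem_range.mp hjr
    set ψ : (({n} : Finset ℕ) → Option ℕ) → ℝ :=
      fun f => if f ⟨n, Finset.mem_singleton_self n⟩ = some j then (1:ℝ) else 0 with hψ
    set φ : ({ x // x ∈ Finset.range n } → Option ℕ) → ℝ :=
      fun f => r * r ^ wrrtDepth (fun k => if h : k ∈ Finset.range n then f ⟨k,h⟩ else none) j with hφ
    have hcomp : IndepFun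
        (fun ω => φ ((fun i : { x // x ∈ Finset.range n } => p i ω)))
        (fun ω => ψ ((fun i : ({n} : Finset ℕ) => p i ω))) μ :=
      hIfin.comp (measurable_of_countable φ) (measurable_of_countable ψ)
    have hφeq : (fun ω => φ ((fun i : { x // x ∈ Finset.range n } => p i ω)))
        = fun ω => r * g j ω := by
      funext ω
      rw [hφ]; simp only
      congr 2
      apply wrrtDepth_congr
      intro k hk
      rw [dif_pos (Finset.mem_range.mpr (lt_of_le_of_lt hk hjn))]
    have hψeq : (fun ω => ψ ((fun i : ({n} : Finset ℕ) => p i ω)))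
        = fun ω => if p n ω = some j then (1:ℝ) else 0 := by
      funext ω; rfl
    rw [hφeq, hψeq] at hcomp
    have hprod : (fun ω => Set.indicator (A j) (fun ω' => r * g j ω') ω)
        = fun ω => (r * g j ω) * (if p n ω = some j then (1:ℝ) else 0) := by
      funext ω
      by_cases h : p n ω = some j
      · rw [Set.indicator_of_mem (show ω ∈ A j from h), if_pos h, mul_one]
      · rw [Set.indicator_of_notMem (show ω ∉ A j from h), if_neg h, mul_zero]
    rw [hprod]
    have hintψ : Integrable (fun ω => if p n ω = some j then (1:ℝ) else 0) μ := by
      have : (fun ω => if p n ω = some j then (1:ℝ) else 0)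
          = Set.indicator (A j) (fun _ => (1:ℝ)) := by
        funext ω; rw [Set.indicator_apply]; rfl
      rw [this]
      exact (integrable_const 1).indicator (hAm j)
    have hmul := IndepFun.integral_mul_eq_mul_integral hcomp
      ((int_g μ r p hpmeas hr0.le hr1.le j).const_mul r).aestronglyMeasurable hintψ.aestronglyMeasurable
    rw [show (fun ω => (r * g j ω) * (if p n ω = some j then (1:ℝ) else 0))
        = (fun ω => r * g j ω) * (fun ω => if p n ω = some j then (1:ℝ) else 0) from rfl,
      hmul]
    have : ∫ ω, (if p n ω = some j then (1:ℝ) else 0) ∂μ = (μ (A j)).toReal := by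
      have h1 : (fun ω => if p n ω = some j then (1:ℝ) else 0)
          = Set.indicator (A j) (fun _ => (1:ℝ)) := by
        funext ω; rw [Set.indicator_apply]; rfl
      rw [h1, integral_indicator_const (1:ℝ) (hAm j), smul_eq_mul, mul_one, measureReal_def]
    rw [this, integral_const_mul]
    ring
  -- assemble
  rw [show (∫ ω, r ^ wrrtDepth (fun k => p k ω) n ∂μ) = ∫ ω, g n ω ∂μ from rfl,
    integral_congr_ae hae, hF]
  rw [integral_add hint0 (integrable_finset_sum _ fun j _ => hintj j)]
  rw [integral_finset_sum _ fun j _ => hintj j]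
  rw [integral_indicator_const r hA0m, smul_eq_mul]
  rw [Finset.sum_congr rfl hIj]
  have hAval : ∀ j ∈ Finset.range n, (μ (A j)).toReal = 1/((n:ℝ)+t) := by
    intro j hj
    rw [hA]; simp only
    rw [hparent n j (Finset.mem_range.mp hj), ENNReal.toReal_ofReal (by positivity)]
  have hA0val : (μ A0).toReal = t/((n:ℝ)+t) := by
    rw [hA0, hroot n, ENNReal.toReal_ofReal (by positivity)]
  rw [measureReal_def, hA0val]
  rw [Finset.sum_congr rfl (fun j hj => by rw [hAval j hj])]


theorem wrrt_key1 (t : ℝ) (ht : 0 < t) (hr : r ∈ Set.Ioo (0:ℝ) 1)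
    (hpmeas : ∀ n, Measurable (p n))
    (hroot : ∀ n : ℕ, μ {ω | p n ω = none} = ENNReal.ofReal (t / (n + t)))
    (hparent : ∀ n : ℕ, ∀ j < n, μ {ω | p n ω = some j} = ENNReal.ofReal (1 / (n + t)))
    (hindep : iIndepFun (m := fun _ : ℕ => (inferInstance : MeasurableSpace (Option ℕ))) p μ) :
    ∀ n : ℕ, wrrtA μ r p n =
      r * ∑ k ∈ Finset.range (n + 1),
        (t / ((k : ℝ) + t)) * ∏ j ∈ Finset.Ioc k n, (1 + r / ((j : ℝ) + t)) := by
  have hsum : ∀ m : ℕ, wrrtA μ r p m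
      = ∑ u ∈ Finset.range (m+1), ∫ ω, r ^ wrrtDepth (fun k => p k ω) u ∂μ := fun m =>
    integral_finset_sum _ (fun u _ => int_g μ r p hpmeas hr.1.le hr.2.le u)
  intro n
  induction n with
  | zero =>
    rw [hsum 0, Finset.sum_range_one, a_rec μ r p t ht hr hpmeas hroot hparent hindep 0,
      Finset.sum_range_one]
    simp [Finset.Ioc_self]
    ring
  | succ n ih =>
    rw [hsum (n+1), Finset.sum_range_succ, ← hsum n,
      a_rec μ r p t ht hr hpmeas hroot hparent hindep (n+1)]
    have hinner : ∑ j ∈ Finset.range (n+1),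
        (1/(((n+1:ℕ):ℝ)+t)) * (r * ∫ ω, r ^ wrrtDepth (fun k => p k ω) j ∂μ)
        = ((1/(((n:ℝ)+1)+t)) * r) * wrrtA μ r p n := by
      have hterm : ∀ j ∈ Finset.range (n+1),
          (1/(((n+1:ℕ):ℝ)+t)) * (r * ∫ ω, r ^ wrrtDepth (fun k => p k ω) j ∂μ)
          = ((1/(((n:ℝ)+1)+t)) * r) * ∫ ω, r ^ wrrtDepth (fun k => p k ω) j ∂μ := by
        intro j _; push_cast; ring
      rw [Finset.sum_congr rfl hterm, ← Finset.mul_sum, ← hsum n]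
    rw [hinner]
    have hR : ∑ k ∈ Finset.range (n+1),
        (t / ((k : ℝ) + t)) * ∏ j ∈ Finset.Ioc k (n+1), (1 + r / ((j : ℝ) + t))
        = (∑ k ∈ Finset.range (n+1),
            (t / ((k : ℝ) + t)) * ∏ j ∈ Finset.Ioc k n, (1 + r / ((j : ℝ) + t)))
          * (1 + r / (((n:ℝ)+1) + t)) := by
      rw [Finset.sum_mul]
      apply Finset.sum_congr rfl
      intro k hk
      rw [Finset.prod_Ioc_succ_top (Nat.lt_succ_iff.mp (Finset.mem_range.mp hk))]
      push_cast
      ring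
    rw [Finset.sum_range_succ, hR, Finset.Ioc_self, Finset.prod_empty, ih]
    push_cast
    ring
end

theorem gamma_prod_aux (s : ℝ) (hs : 0 < s) (k : ℕ) : ∀ n : ℕ, k ≤ n →
    Real.Gamma ((n:ℝ)+1+s) = Real.Gamma ((k:ℝ)+1+s) * ∏ j ∈ Finset.Ioc k n, ((j:ℝ)+s) := by
  intro n
  induction n with
  | zero => intro h; interval_cases k; simp
  | succ n ih =>
    intro h
    rcases Nat.lt_or_ge k (n+1) with hk | hk
    · have hk' : k ≤ n := Nat.lt_succ_iff.mp hk
      rw [Finset.prod_Ioc_succ_top hk', ← mul_assoc, ← ih hk']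
      have h1 : ((n:ℝ)+1) + 1 + s = ((n:ℝ)+1+s) + 1 := by ring
      have h2 : ((n:ℝ)+1+s) ≠ 0 := by positivity
      push_cast
      rw [h1, Real.Gamma_add_one h2]
      ring
    · have : k = n+1 := le_antisymm h hk
      subst this; simp

theorem closed_eq (t r : ℝ) (ht : 0 < t) (hr : 0 < r) (n k : ℕ) (hkn : k ≤ n) :
    (t / ((k : ℝ) + t)) * ∏ j ∈ Finset.Ioc k n, (1 + r / ((j : ℝ) + t)) =
    t * ((Real.Gamma ((n : ℝ) + 1 + t + r) / Real.Gamma ((n : ℝ) + 1 + t)) *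
            (Real.Gamma ((k : ℝ) + t) / Real.Gamma ((k : ℝ) + 1 + t + r))) := by
  have hkt : (0:ℝ) < (k:ℝ) + t := by positivity
  have hprod : ∏ j ∈ Finset.Ioc k n, (1 + r / ((j : ℝ) + t))
      = (∏ j ∈ Finset.Ioc k n, ((j:ℝ) + (t+r))) / (∏ j ∈ Finset.Ioc k n, ((j:ℝ) + t)) := by
    rw [← Finset.prod_div_distrib]
    apply Finset.prod_congr rfl
    intro j hj
    have : (0:ℝ) < (j:ℝ) + t := by positivity
    field_simp
    ring
  have hg1 : Real.Gamma ((n:ℝ)+1+t+r) = Real.Gamma ((k:ℝ)+1+t+r) * ∏ j ∈ Finset.Ioc k n, ((j:ℝ)+(t+r)) := by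
    have := gamma_prod_aux (t+r) (by positivity) k n hkn
    rw [show (n:ℝ)+1+t+r = (n:ℝ)+1+(t+r) by ring, show (k:ℝ)+1+t+r = (k:ℝ)+1+(t+r) by ring]
    exact this
  have hg2 : Real.Gamma ((n:ℝ)+1+t) = Real.Gamma ((k:ℝ)+1+t) * ∏ j ∈ Finset.Ioc k n, ((j:ℝ)+t) :=
    gamma_prod_aux t ht k n hkn
  have hg3 : Real.Gamma ((k:ℝ)+1+t) = ((k:ℝ)+t) * Real.Gamma ((k:ℝ)+t) := by
    rw [show (k:ℝ)+1+t = ((k:ℝ)+t)+1 by ring, Real.Gamma_add_one (ne_of_gt hkt)]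
  have hGpos : ∀ x : ℝ, 0 < x → Real.Gamma x ≠ 0 := fun x hx => ne_of_gt (Real.Gamma_pos_of_pos hx)
  have hPt : (∏ j ∈ Finset.Ioc k n, ((j:ℝ)+t)) ≠ 0 := by
    apply Finset.prod_ne_zero_iff.mpr; intro j _; positivity
  have h1 : Real.Gamma ((k:ℝ)+1+t+r) ≠ 0 := hGpos _ (by positivity)
  have h2 : Real.Gamma ((n:ℝ)+1+t) ≠ 0 := hGpos _ (by positivity)
  have h3 : Real.Gamma ((k:ℝ)+t) ≠ 0 := hGpos _ hkt
  rw [hprod, hg1, hg2, hg3]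
  field_simp

/-- **Equation (3.9).** The closed form for `A_n(r)`:
`A_n(r) = r ∑_{k=0}^n (t/(k+t)) ∏_{j=k+1}^n (1 + r/(j+t))
        = r t ∑_{k=0}^n [Γ(n+1+t+r)/Γ(n+1+t)]·[Γ(k+t)/Γ(k+1+t+r)]`. -/
theorem wrrt_A_closed_form
    {Ω : Type*} [MeasurableSpace Ω] (μ : Measure Ω) [IsProbabilityMeasure μ]
    (t r : ℝ) (ht : 0 < t) (hr : r ∈ Set.Ioo (0 : ℝ) 1)
    -- `p n` is the (random) parent of the vertex `w n` of the weighted random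
    -- recursive tree with root weight `t`:
    (p : ℕ → Ω → Option ℕ) (hpmeas : ∀ n, Measurable (p n))
    (hroot : ∀ n : ℕ, μ {ω | p n ω = none} = ENNReal.ofReal (t / (n + t)))
    (hparent : ∀ n : ℕ, ∀ j < n, μ {ω | p n ω = some j} = ENNReal.ofReal (1 / (n + t)))
    (hindep : iIndepFun (m := fun _ : ℕ => (inferInstance : MeasurableSpace (Option ℕ))) p μ)
    :
    ∀ n : ℕ,
      wrrtA μ r p n =
        r * ∑ k ∈ Finset.range (n + 1),
          (t / ((k : ℝ) + t)) * ∏ j ∈ Finset.Ioc k n, (1 + r / ((j : ℝ) + t)) ∧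
      wrrtA μ r p n =
        r * t * ∑ k ∈ Finset.range (n + 1),
          (Real.Gamma ((n : ℝ) + 1 + t + r) / Real.Gamma ((n : ℝ) + 1 + t)) *
            (Real.Gamma ((k : ℝ) + t) / Real.Gamma ((k : ℝ) + 1 + t + r)) := by
  intro n
  have h1 := wrrt_key1 μ r p t ht hr hpmeas hroot hparent hindep n
  refine ⟨h1, ?_⟩
  rw [h1]
  have hterm : ∀ k ∈ Finset.range (n+1),
      (t / ((k : ℝ) + t)) * ∏ j ∈ Finset.Ioc k n, (1 + r / ((j : ℝ) + t))
      = t * ((Real.Gamma ((n : ℝ) + 1 + t + r) / Real.Gamma ((n : ℝ) + 1 + t)) *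
          (Real.Gamma ((k : ℝ) + t) / Real.Gamma ((k : ℝ) + 1 + t + r))) := fun k hk =>
    closed_eq t r ht hr.1 n k (Nat.lt_succ_iff.mp (Finset.mem_range.mp hk))
  rw [Finset.sum_congr rfl hterm, ← Finset.mul_sum]
  ring
end

section
/- Fix t > 0 and r ∈ (0,1), and for the weighted random recursive tree with root weight t let A_n(r) := E[Σ_{u ∈ T'_n} r^{d(u)}] and B_n(r) := E[Σ_{u,w ∈ T'_n} r^{d(u,w)}]. With the convention A_{−1}(r) := 0, for every n ≥ 0 the closed form B_n(r) = Σ_{k=0}^n [1 + (2rt/(k+t)) A_{k−1}(r)] ∏_{j=k+1}^n (1 + 2r/(j+t)) holds. -/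
open MeasureTheory ProbabilityTheory Filter Topology

section Det

variable (P Q : ℕ → Option ℕ)

lemma wrrt_depth_pos (n : ℕ) : 1 ≤ wrrtDepth P n := by
  rw [wrrtDepth]
  rcases h : P n with _ | j
  · simp
  · simp only
    split <;> omega

lemma wrrt_depthV_none : wrrtDepthV P none = 0 := rfl

lemma wrrt_depthV_some (n : ℕ) : wrrtDepthV P (some n) = wrrtDepth P n := rfl

lemma wrrt_depthV_eq_zero {v : Option ℕ} : wrrtDepthV P v = 0 ↔ v = none := by
  cases v with
  | none => simp [wrrtDepthV]
  | some n => simpa [wrrtDepthV] using fun h => absurd h (by have := wrrt_depth_pos P n; omega)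

lemma wrrt_depthV_parent (n : ℕ) :
    wrrtDepthV P (wrrtParent P (some n)) + 1 = wrrtDepth P n := by
  rw [wrrtParent, wrrtDepth]
  rcases h : P n with _ | j
  · simp [wrrtDepthV]
  · simp only
    split <;> simp [wrrtDepthV]

/-- All vertices in the "ancestor-closed" set below index `n`. -/
def wrrtVLT (v : Option ℕ) (n : ℕ) : Prop := ∀ k, v = some k → k < n

lemma wrrtVLT_none (n : ℕ) : wrrtVLT none n := by intro k h; cases h

lemma wrrtVLT_some {k n : ℕ} (h : k < n) : wrrtVLT (some k) n := by
  intro k' h'; cases h'; exact h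

lemma wrrtVLT_parent {v : Option ℕ} {n : ℕ} (h : wrrtVLT v n) :
    wrrtVLT (wrrtParent P v) n := by
  cases v with
  | none => exact h
  | some m =>
    have hm : m < n := h m rfl
    intro k hk
    rw [wrrtParent] at hk
    rcases hP : P m with _ | j <;> rw [hP] at hk
    · cases hk
    · simp only at hk
      split at hk
      · cases hk; omega
      · cases hk

lemma wrrt_distAux_self (fuel : ℕ) (u : Option ℕ) : wrrtDistAux P fuel u u = 0 := by
  cases fuel <;> simp [wrrtDistAux]

lemma wrrt_distAux_fuel : ∀ N, ∀ fuel u w, wrrtDepthV P u + wrrtDepthV P w = N → N ≤ fuel →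
    wrrtDistAux P fuel u w = wrrtDistAux P N u w := by
  intro N
  induction N using Nat.strong_induction_on with
  | _ N IH =>
    intro fuel u w hsum hle
    by_cases huw : u = w
    · subst huw; rw [wrrt_distAux_self, wrrt_distAux_self]
    -- u ≠ w, so not both none, so N ≥ 1
    have hN : 1 ≤ N := by
      by_contra h
      have h0 : N = 0 := by omega
      subst h0
      have hu : wrrtDepthV P u = 0 := by omega
      have hw : wrrtDepthV P w = 0 := by omega
      rw [wrrt_depthV_eq_zero] at hu hw
      exact huw (hu.trans hw.symm)
    obtain ⟨M, rfl⟩ : ∃ M, N = M + 1 := ⟨N - 1, by omega⟩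
    obtain ⟨f, rfl⟩ : ∃ f, fuel = f + 1 := ⟨fuel - 1, by omega⟩
    rw [wrrtDistAux, wrrtDistAux]
    simp only [if_neg huw]
    by_cases hd : wrrtDepthV P u < wrrtDepthV P w
    · rw [if_pos hd, if_pos hd]
      have hw1 : 1 ≤ wrrtDepthV P w := by omega
      have hpd : wrrtDepthV P (wrrtParent P w) + 1 = wrrtDepthV P w := by
        rcases w with _ | m
        · simp [wrrt_depthV_none] at hw1
        · exact wrrt_depthV_parent P m
      have hsum' : wrrtDepthV P u + wrrtDepthV P (wrrtParent P w) = M := by omega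
      rw [IH M (by omega) f u (wrrtParent P w) hsum' (by omega),
          IH M (by omega) M u (wrrtParent P w) hsum' (by omega)]
    · rw [if_neg hd, if_neg hd]
      have hu1 : 1 ≤ wrrtDepthV P u := by
        by_contra h
        have hu : wrrtDepthV P u = 0 := by omega
        have hw : wrrtDepthV P w = 0 := by omega
        rw [wrrt_depthV_eq_zero] at hu hw
        exact huw (hu.trans hw.symm)
      have hpd : wrrtDepthV P (wrrtParent P u) + 1 = wrrtDepthV P u := by
        rcases u with _ | m
        · simp [wrrt_depthV_none] at hu1
        · exact wrrt_depthV_parent P m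
      have hsum' : wrrtDepthV P (wrrtParent P u) + wrrtDepthV P w = M := by omega
      rw [IH M (by omega) f (wrrtParent P u) w hsum' (by omega),
          IH M (by omega) M (wrrtParent P u) w hsum' (by omega)]

lemma wrrt_dist_eq_aux (fuel : ℕ) (u w : Option ℕ)
    (h : wrrtDepthV P u + wrrtDepthV P w ≤ fuel) :
    wrrtDistAux P fuel u w = wrrtDist P u w :=
  wrrt_distAux_fuel P _ fuel u w rfl h

lemma wrrt_dist_self (u : Option ℕ) : wrrtDist P u u = 0 := wrrt_distAux_self P _ u

lemma wrrt_dist_step_right {u w : Option ℕ} (huw : u ≠ w)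
    (hd : wrrtDepthV P u < wrrtDepthV P w) :
    wrrtDist P u w = wrrtDist P u (wrrtParent P w) + 1 := by
  have hw1 : 1 ≤ wrrtDepthV P w := by omega
  have hpd : wrrtDepthV P (wrrtParent P w) + 1 = wrrtDepthV P w := by
    rcases w with _ | m
    · simp [wrrt_depthV_none] at hw1
    · exact wrrt_depthV_parent P m
  obtain ⟨M, hM⟩ : ∃ M, wrrtDepthV P u + wrrtDepthV P w = M + 1 :=
    ⟨wrrtDepthV P u + wrrtDepthV P w - 1, by omega⟩
  rw [wrrtDist, hM, wrrtDistAux, if_neg huw, if_pos hd,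
    wrrt_dist_eq_aux P M u (wrrtParent P w) (by omega)]

lemma wrrt_dist_step_left {u w : Option ℕ} (huw : u ≠ w)
    (hd : ¬ wrrtDepthV P u < wrrtDepthV P w) :
    wrrtDist P u w = wrrtDist P (wrrtParent P u) w + 1 := by
  have hu1 : 1 ≤ wrrtDepthV P u := by
    by_contra h
    have hu : wrrtDepthV P u = 0 := by omega
    have hw : wrrtDepthV P w = 0 := by omega
    rw [wrrt_depthV_eq_zero] at hu hw
    exact huw (hu.trans hw.symm)
  have hpd : wrrtDepthV P (wrrtParent P u) + 1 = wrrtDepthV P u := by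
    rcases u with _ | m
    · simp [wrrt_depthV_none] at hu1
    · exact wrrt_depthV_parent P m
  obtain ⟨M, hM⟩ : ∃ M, wrrtDepthV P u + wrrtDepthV P w = M + 1 :=
    ⟨wrrtDepthV P u + wrrtDepthV P w - 1, by omega⟩
  rw [wrrtDist, hM, wrrtDistAux, if_neg huw, if_neg hd,
    wrrt_dist_eq_aux P M (wrrtParent P u) w (by omega)]

lemma wrrt_depthV_ne {u w : Option ℕ} (h : wrrtDepthV P u ≠ wrrtDepthV P w) : u ≠ w := by
  intro he; exact h (by rw [he])

lemma wrrt_dist_comm (u w : Option ℕ) : wrrtDist P u w = wrrtDist P w u := by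
  generalize hN : wrrtDepthV P u + wrrtDepthV P w = N
  induction N using Nat.strong_induction_on generalizing u w with
  | _ N IH =>
    by_cases huw : u = w
    · subst huw; rfl
    have hdparent : ∀ v : Option ℕ, 1 ≤ wrrtDepthV P v →
        wrrtDepthV P (wrrtParent P v) + 1 = wrrtDepthV P v := by
      intro v hv
      rcases v with _ | m
      · simp [wrrt_depthV_none] at hv
      · exact wrrt_depthV_parent P m
    rcases lt_trichotomy (wrrtDepthV P u) (wrrtDepthV P w) with hd | hd | hd
    · have h1 := wrrt_dist_step_right P huw hd
      have h2 := wrrt_dist_step_left P (Ne.symm huw) (by omega)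
      have hp := hdparent w (by omega)
      rw [h1, h2, IH (N - 1) (by omega) u (wrrtParent P w) (by omega)]
    · -- equal depths
      have hu1 : 1 ≤ wrrtDepthV P u := by
        by_contra h
        have h0u : wrrtDepthV P u = 0 := by omega
        have h0w : wrrtDepthV P w = 0 := by omega
        rw [wrrt_depthV_eq_zero] at h0u h0w
        exact huw (h0u.trans h0w.symm)
      have hpu := hdparent u hu1
      have hpw := hdparent w (by omega)
      have h1 := wrrt_dist_step_left P huw (by omega)
      have h2 := wrrt_dist_step_left P (Ne.symm huw) (by omega)
      have h3 := wrrt_dist_step_right P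
        (wrrt_depthV_ne P (by omega : wrrtDepthV P (wrrtParent P u) ≠ wrrtDepthV P w))
        (by omega)
      have h4 := wrrt_dist_step_right P
        (wrrt_depthV_ne P (by omega : wrrtDepthV P (wrrtParent P w) ≠ wrrtDepthV P u))
        (by omega)
      rw [h1, h2, h3, h4,
        IH (N - 2) (by omega) (wrrtParent P u) (wrrtParent P w) (by omega)]
    · have h1 := wrrt_dist_step_left P huw (by omega)
      have h2 := wrrt_dist_step_right P (Ne.symm huw) hd
      have hp := hdparent u (by omega)
      rw [h1, h2, IH (N - 1) (by omega) (wrrtParent P u) w (by omega)]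

lemma wrrt_dist_none (u : Option ℕ) : wrrtDist P u none = wrrtDepthV P u := by
  generalize hN : wrrtDepthV P u = N
  induction N using Nat.strong_induction_on generalizing u with
  | _ N IH =>
    rcases Nat.eq_zero_or_pos N with h0 | hpos
    · subst h0
      rw [wrrt_depthV_eq_zero] at hN
      subst hN
      exact wrrt_dist_self P none
    · have hune : u ≠ none := by
        intro h; subst h; simp [wrrt_depthV_none] at hN; omega
      have hpd : wrrtDepthV P (wrrtParent P u) + 1 = wrrtDepthV P u := by
        rcases u with _ | m
        · exact absurd rfl hune
        · exact wrrt_depthV_parent P m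
      rw [wrrt_dist_step_left P hune (by rw [hN, wrrt_depthV_none]; omega),
        IH (N - 1) (by omega) (wrrtParent P u) (by omega)]
      omega

/-- Key step: distance to a "last" vertex whose index is above everything in `u`'s
ancestor chain. -/
lemma wrrt_dist_step_leaf (n : ℕ) : ∀ u, wrrtVLT u n →
    wrrtDist P u (some n) = wrrtDist P u (wrrtParent P (some n)) + 1 := by
  intro u hu
  generalize hN : wrrtDepthV P u = N
  induction N using Nat.strong_induction_on generalizing u with
  | _ N IH =>
    have hune : u ≠ some n := by
      intro h; subst h; exact absurd (hu n rfl) (lt_irrefl n)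
    have hD : wrrtDepthV P (wrrtParent P (some n)) + 1 = wrrtDepthV P (some n) :=
      wrrt_depthV_parent P n
    by_cases hd : wrrtDepthV P u < wrrtDepthV P (some n)
    · exact wrrt_dist_step_right P hune hd
    · have hu1 : 1 ≤ wrrtDepthV P u := by
        have := wrrt_depth_pos P n
        simp only [wrrt_depthV_some] at hd
        omega
      have hune' : u ≠ none := by
        intro h; subst h; simp [wrrt_depthV_none] at hu1
      have hpd : wrrtDepthV P (wrrtParent P u) + 1 = wrrtDepthV P u := by
        rcases u with _ | m
        · exact absurd rfl hune'
        · exact wrrt_depthV_parent P m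
      have h1 := wrrt_dist_step_left P hune hd
      have h2 := IH (N - 1) (by omega) (wrrtParent P u) (wrrtVLT_parent P hu) (by omega)
      have h3 := wrrt_dist_step_left P
        (wrrt_depthV_ne P (by omega : wrrtDepthV P u ≠ wrrtDepthV P (wrrtParent P (some n))))
        (by omega)
      rw [h1, h2, h3]

lemma wrrt_depth_le (n : ℕ) : wrrtDepth P n ≤ n + 1 := by
  induction n using Nat.strong_induction_on with
  | _ n IH =>
    rw [wrrtDepth]
    rcases h : P n with _ | j
    · simp
    · simp only
      split
      · next hj => have := IH j hj; omega
      · omega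

end Det

section Congr

variable {P Q : ℕ → Option ℕ} {N : ℕ}

lemma wrrt_depth_congr (H : ∀ k < N, P k = Q k) : ∀ u < N, wrrtDepth P u = wrrtDepth Q u := by
  intro u
  induction u using Nat.strong_induction_on with
  | _ u IH =>
    intro hu
    rw [wrrtDepth, wrrtDepth, ← H u hu]
    rcases h : P u with _ | j
    · rfl
    · simp only
      split
      · next hj => rw [IH j hj (by omega)]
      · rfl

lemma wrrt_parent_congr (H : ∀ k < N, P k = Q k) {v : Option ℕ} (hv : wrrtVLT v N) :
    wrrtParent P v = wrrtParent Q v := by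
  cases v with
  | none => rfl
  | some m => rw [wrrtParent, wrrtParent, H m (hv m rfl)]

lemma wrrt_depthV_congr (H : ∀ k < N, P k = Q k) {v : Option ℕ} (hv : wrrtVLT v N) :
    wrrtDepthV P v = wrrtDepthV Q v := by
  cases v with
  | none => rfl
  | some m => exact wrrt_depth_congr H m (hv m rfl)

lemma wrrt_distAux_congr (H : ∀ k < N, P k = Q k) :
    ∀ fuel u w, wrrtVLT u N → wrrtVLT w N →
      wrrtDistAux P fuel u w = wrrtDistAux Q fuel u w := by
  intro fuel
  induction fuel with
  | zero => intro u w _ _; rfl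
  | succ f IH =>
    intro u w hu hw
    rw [wrrtDistAux, wrrtDistAux, wrrt_depthV_congr H hu, wrrt_depthV_congr H hw]
    by_cases huw : u = w
    · rw [if_pos huw, if_pos huw]
    rw [if_neg huw, if_neg huw]
    by_cases hd : wrrtDepthV Q u < wrrtDepthV Q w
    · rw [if_pos hd, if_pos hd, ← wrrt_parent_congr H hw,
        IH u (wrrtParent P w) hu (wrrtVLT_parent P hw)]
    · rw [if_neg hd, if_neg hd, ← wrrt_parent_congr H hu,
        IH (wrrtParent P u) w (wrrtVLT_parent P hu) hw]

lemma wrrt_dist_congr (H : ∀ k < N, P k = Q k) {u w : Option ℕ}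
    (hu : wrrtVLT u N) (hw : wrrtVLT w N) :
    wrrtDist P u w = wrrtDist Q u w := by
  rw [wrrtDist, wrrtDist, wrrt_depthV_congr H hu, wrrt_depthV_congr H hw,
    wrrt_distAux_congr H _ u w hu hw]
section Prob

instance inst_s9 : MeasurableSingletonClass (Option ℕ) := ⟨fun _ => trivial⟩

variable {Ω : Type*} [MeasurableSpace Ω] (μ : Measure Ω) [IsProbabilityMeasure μ]
  (t r : ℝ) (p : ℕ → Ω → Option ℕ)

/-- Measurability of a functional of the tree that depends only on parents below `N`. -/
lemma wrrt_meas_of_local (hpmeas : ∀ n, Measurable (p n)) (N : ℕ) (F : (ℕ → Option ℕ) → ℝ)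
    (hF : ∀ P Q : ℕ → Option ℕ, (∀ k < N, P k = Q k) → F P = F Q) :
    Measurable fun ω => F (fun k => p k ω) := by
  have heq : (fun ω => F (fun k => p k ω)) =
      (fun x : Fin N → Option ℕ => F (fun k => if h : k < N then x ⟨k, h⟩ else none)) ∘
        (fun ω i => p i ω) := by
    funext ω
    exact (hF _ _ (fun k hk => by simp [dif_pos hk])).symm
  rw [heq]
  exact (measurable_of_countable _).comp (measurable_pi_lambda _ fun i => hpmeas i)

lemma wrrt_integrable_of_local (hpmeas : ∀ n, Measurable (p n)) (N : ℕ)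
    (F : (ℕ → Option ℕ) → ℝ)
    (hF : ∀ P Q : ℕ → Option ℕ, (∀ k < N, P k = Q k) → F P = F Q)
    (C : ℝ) (hC : ∀ P, |F P| ≤ C) :
    Integrable (fun ω => F (fun k => p k ω)) μ := by
  refine ⟨(wrrt_meas_of_local p hpmeas N F hF).aestronglyMeasurable, ?_⟩
  exact MeasureTheory.HasFiniteIntegral.of_bounded (C := C)
    (Filter.Eventually.of_forall fun ω => by simpa [Real.norm_eq_abs] using hC _)

lemma wrrt_indep_of_local (hpmeas : ∀ n, Measurable (p n))
    (hindep : iIndepFun (m := fun _ : ℕ => (inferInstance : MeasurableSpace (Option ℕ))) p μ)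
    (m : ℕ) (ψ : Option ℕ → ℝ) (F : (ℕ → Option ℕ) → ℝ)
    (hF : ∀ P Q : ℕ → Option ℕ, (∀ k < m, P k = Q k) → F P = F Q) :
    IndepFun (fun ω => ψ (p m ω)) (fun ω => F (fun k => p k ω)) μ := by
  have hdisj : Disjoint ({m} : Finset ℕ) (Finset.range m) := by
    simp [Finset.disjoint_singleton_left]
  have base := hindep.indepFun_finset {m} (Finset.range m) hdisj hpmeas
  have hcomp := base.comp
    (φ := fun x : (({m} : Finset ℕ) : Type) → Option ℕ => ψ (x ⟨m, Finset.mem_singleton_self m⟩))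
    (ψ := fun y : ((Finset.range m : Finset ℕ) : Type) → Option ℕ =>
      F (fun k => if h : k < m then y ⟨k, Finset.mem_range.mpr h⟩ else none))
    (measurable_of_countable _) (measurable_of_countable _)
  have h1 : (fun x : (({m} : Finset ℕ) : Type) → Option ℕ =>
        ψ (x ⟨m, Finset.mem_singleton_self m⟩)) ∘ (fun ω (i : ({m} : Finset ℕ)) => p i ω) =
      fun ω => ψ (p m ω) := rfl
  have h2 : (fun y : ((Finset.range m : Finset ℕ) : Type) → Option ℕ =>
        F (fun k => if h : k < m then y ⟨k, Finset.mem_range.mpr h⟩ else none)) ∘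
        (fun ω (i : (Finset.range m : Finset ℕ)) => p i ω) =
      fun ω => F (fun k => p k ω) := by
    funext ω
    exact hF _ _ (fun k hk => by simp [dif_pos hk])
  rwa [h1, h2] at hcomp

/-- The parent of the new vertex `m` as a function of `p m`. -/
def wrrtPhi (m : ℕ) : Option ℕ → Option ℕ
  | none => none
  | some j => if j < m then some j else none

lemma wrrt_parent_eq_phi (P : ℕ → Option ℕ) (m : ℕ) :
    wrrtParent P (some m) = wrrtPhi m (P m) := by
  rw [wrrtParent]
  rcases h : P m with _ | j <;> simp [wrrtPhi]

lemma wrrt_measure_phi_none (hpmeas : ∀ n, Measurable (p n)) (ht : 0 < t)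
    (hroot : ∀ n : ℕ, μ {ω | p n ω = none} = ENNReal.ofReal (t / (n + t)))
    (hparent : ∀ n : ℕ, ∀ j < n, μ {ω | p n ω = some j} = ENNReal.ofReal (1 / (n + t)))
    (m : ℕ) :
    μ {ω | wrrtPhi m (p m ω) = none} = ENNReal.ofReal (t / (m + t)) := by
  have hmt : (0:ℝ) < m + t := by positivity
  set Good : Set Ω := {ω | p m ω = none} ∪ ⋃ j ∈ Finset.range m, {ω | p m ω = some j} with hGood
  have hmeas : ∀ s : Set (Option ℕ), MeasurableSet ((p m) ⁻¹' s) :=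
    fun s => hpmeas m (by trivial)
  have hmeasGood : MeasurableSet Good := by
    refine MeasurableSet.union (hmeas {none}) ?_
    exact MeasurableSet.biUnion (Finset.range m).countable_toSet
      (fun j _ => hmeas {some j})
  have hμGood : μ Good = 1 := by
    have hdisj : Disjoint {ω | p m ω = none} (⋃ j ∈ Finset.range m, {ω | p m ω = some j}) := by
      rw [Set.disjoint_left]
      rintro ω h1 h2
      simp only [Set.mem_iUnion, Set.mem_setOf_eq] at h1 h2
      obtain ⟨j, _, hj⟩ := h2
      rw [h1] at hj; cases hj
    have hpd : Set.PairwiseDisjoint (↑(Finset.range m)) (fun j => {ω | p m ω = some j}) := by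
      intro a _ b _ hab
      rw [Function.onFun, Set.disjoint_left]
      intro ω h1 h2
      simp only [Set.mem_setOf_eq] at h1 h2
      rw [h1] at h2
      exact hab (Option.some.inj h2)
    rw [measure_union hdisj (MeasurableSet.biUnion (Finset.range m).countable_toSet
      (fun j _ => hmeas {some j})),
      measure_biUnion_finset hpd (fun j _ => hmeas {some j}), hroot m]
    have hsum : ∑ j ∈ Finset.range m, μ {ω | p m ω = some j}
        = ∑ j ∈ Finset.range m, ENNReal.ofReal (1 / (m + t)) :=
      Finset.sum_congr rfl fun j hj => hparent m j (Finset.mem_range.mp hj)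
    rw [hsum, Finset.sum_const, Finset.card_range, nsmul_eq_mul,
      ← ENNReal.ofReal_natCast m, ← ENNReal.ofReal_mul (by positivity),
      ← ENNReal.ofReal_add (by positivity) (by positivity)]
    rw [show t / (m + t) + (m : ℝ) * (1 / (m + t)) = 1 by field_simp; ring]
    exact ENNReal.ofReal_one
  have hμcompl : μ Goodᶜ = 0 := by
    have := measure_compl hmeasGood (by rw [hμGood]; exact ENNReal.one_ne_top)
    rw [hμGood, measure_univ] at this
    simpa using this
  have hsub1 : {ω | p m ω = none} ⊆ {ω | wrrtPhi m (p m ω) = none} := by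
    intro ω h
    simp only [Set.mem_setOf_eq] at h ⊢
    rw [h]; rfl
  have hsub2 : {ω | wrrtPhi m (p m ω) = none} ⊆ {ω | p m ω = none} ∪ Goodᶜ := by
    intro ω h
    simp only [Set.mem_setOf_eq] at h
    rcases hx : p m ω with _ | j
    · exact Set.mem_union_left _ hx
    · refine Set.mem_union_right _ ?_
      rw [hx] at h
      have hj : ¬ j < m := by
        intro hj
        rw [wrrtPhi, if_pos hj] at h
        cases h
      simp only [hGood, Set.mem_compl_iff, Set.mem_union, Set.mem_iUnion, Set.mem_setOf_eq,
        not_or, not_exists]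
      constructor
      · rw [hx]; simp
      · intro j' hj' hsome
        rw [hx] at hsome
        injection hsome with he
        exact hj (he ▸ Finset.mem_range.mp hj')
  refine le_antisymm ?_ ?_
  · calc μ {ω | wrrtPhi m (p m ω) = none} ≤ μ ({ω | p m ω = none} ∪ Goodᶜ) := measure_mono hsub2
      _ ≤ μ {ω | p m ω = none} + μ Goodᶜ := measure_union_le _ _
      _ = ENNReal.ofReal (t / (m + t)) := by rw [hμcompl, hroot m, add_zero]
  · rw [← hroot m]; exact measure_mono hsub1

lemma wrrt_measure_phi_some
    (hparent : ∀ n : ℕ, ∀ j < n, μ {ω | p n ω = some j} = ENNReal.ofReal (1 / (n + t)))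
    (m j : ℕ) (hj : j < m) :
    μ {ω | wrrtPhi m (p m ω) = some j} = ENNReal.ofReal (1 / (m + t)) := by
  rw [← hparent m j hj]
  congr 1
  ext ω
  simp only [Set.mem_setOf_eq]
  constructor
  · intro h
    rcases hx : p m ω with _ | j'
    · rw [hx] at h; cases h
    · rw [hx] at h
      rw [wrrtPhi] at h
      split at h
      · exact congrArg some (Option.some.inj h)
      · cases h
  · intro h
    rw [h, wrrtPhi, if_pos hj]

end Prob
section Functionals

/-- The integrand of `B_n`. -/
noncomputable def wrrtFB (r : ℝ) (n : ℕ) (P : ℕ → Option ℕ) : ℝ :=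
  ∑ u ∈ Finset.range (n+1), ∑ w ∈ Finset.range (n+1), r ^ wrrtDist P (some u) (some w)

/-- Sum of `r ^ d(u, v)` over `u ≤ n` for a fixed vertex `v`. -/
noncomputable def wrrtHV (r : ℝ) (n : ℕ) (v : Option ℕ) (P : ℕ → Option ℕ) : ℝ :=
  ∑ u ∈ Finset.range (n+1), r ^ wrrtDist P (some u) v

/-- Indicator that the parent of the new vertex `m` is `v`. -/
noncomputable def wrrtInd (m : ℕ) (v : Option ℕ) (o : Option ℕ) : ℝ :=
  if wrrtPhi m o = v then 1 else 0

lemma wrrtPhi_some_lt {m j : ℕ} {o : Option ℕ} (h : wrrtPhi m o = some j) : j < m := by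
  rcases o with _ | j'
  · cases h
  · rw [wrrtPhi] at h
    split at h
    · next hj => cases h; exact hj
    · cases h

lemma wrrtHV_local {N : ℕ} (r : ℝ) (n : ℕ) (v : Option ℕ) (hv : wrrtVLT v N) (hn : n < N) :
    ∀ P Q : ℕ → Option ℕ, (∀ k < N, P k = Q k) → wrrtHV r n v P = wrrtHV r n v Q := by
  intro P Q H
  refine Finset.sum_congr rfl fun u hu => ?_
  rw [wrrt_dist_congr H (wrrtVLT_some (lt_of_le_of_lt
    (Nat.lt_succ_iff.mp (Finset.mem_range.mp hu)) hn)) hv]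

lemma wrrtFB_local {N : ℕ} (r : ℝ) (n : ℕ) (hn : n < N) :
    ∀ P Q : ℕ → Option ℕ, (∀ k < N, P k = Q k) → wrrtFB r n P = wrrtFB r n Q := by
  intro P Q H
  refine Finset.sum_congr rfl fun u hu => Finset.sum_congr rfl fun w hw => ?_
  rw [wrrt_dist_congr H
    (wrrtVLT_some (lt_of_le_of_lt (Nat.lt_succ_iff.mp (Finset.mem_range.mp hu)) hn))
    (wrrtVLT_some (lt_of_le_of_lt (Nat.lt_succ_iff.mp (Finset.mem_range.mp hw)) hn))]

lemma wrrt_pow_abs_le {r : ℝ} (habs : |r| ≤ 1) (d : ℕ) : |r ^ d| ≤ 1 := by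
  rw [abs_pow]
  exact pow_le_one₀ (abs_nonneg r) habs

lemma wrrtHV_bound {r : ℝ} (habs : |r| ≤ 1) (n : ℕ) (v : Option ℕ) (P : ℕ → Option ℕ) :
    |wrrtHV r n v P| ≤ (n : ℝ) + 1 := by
  calc |wrrtHV r n v P| ≤ ∑ u ∈ Finset.range (n+1), |r ^ wrrtDist P (some u) v| :=
        Finset.abs_sum_le_sum_abs _ _
    _ ≤ ∑ _u ∈ Finset.range (n+1), (1:ℝ) :=
        Finset.sum_le_sum fun u _ => wrrt_pow_abs_le habs _
    _ = (n : ℝ) + 1 := by simp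

lemma wrrtFB_bound {r : ℝ} (habs : |r| ≤ 1) (n : ℕ) (P : ℕ → Option ℕ) :
    |wrrtFB r n P| ≤ ((n : ℝ) + 1) * ((n : ℝ) + 1) := by
  calc |wrrtFB r n P| ≤ ∑ u ∈ Finset.range (n+1),
        |∑ w ∈ Finset.range (n+1), r ^ wrrtDist P (some u) (some w)| :=
        Finset.abs_sum_le_sum_abs _ _
    _ ≤ ∑ _u ∈ Finset.range (n+1), ((n : ℝ) + 1) := by
        refine Finset.sum_le_sum fun u _ => ?_
        calc |∑ w ∈ Finset.range (n+1), r ^ wrrtDist P (some u) (some w)|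
            ≤ ∑ w ∈ Finset.range (n+1), |r ^ wrrtDist P (some u) (some w)| :=
              Finset.abs_sum_le_sum_abs _ _
          _ ≤ ∑ _w ∈ Finset.range (n+1), (1:ℝ) :=
              Finset.sum_le_sum fun w _ => wrrt_pow_abs_le habs _
          _ = (n : ℝ) + 1 := by simp
    _ = ((n : ℝ) + 1) * ((n : ℝ) + 1) := by
        rw [Finset.sum_const, Finset.card_range]
        push_cast; ring

lemma wrrtInd_bound (m : ℕ) (v o : Option ℕ) : |wrrtInd m v o| ≤ 1 := by
  rw [wrrtInd]
  split <;> simp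

end Functionals

section Recursion

variable {Ω : Type*} [MeasurableSpace Ω]

theorem wrrt_B_rec (μ : Measure Ω) [IsProbabilityMeasure μ]
    (t r : ℝ) (ht : 0 < t) (hr : r ∈ Set.Ioo (0 : ℝ) 1)
    (p : ℕ → Ω → Option ℕ) (hpmeas : ∀ n, Measurable (p n))
    (hroot : ∀ n : ℕ, μ {ω | p n ω = none} = ENNReal.ofReal (t / (n + t)))
    (hparent : ∀ n : ℕ, ∀ j < n, μ {ω | p n ω = some j} = ENNReal.ofReal (1 / (n + t)))
    (hindep : iIndepFun (m := fun _ : ℕ => (inferInstance : MeasurableSpace (Option ℕ))) p μ)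
    (n : ℕ) :
    wrrtB μ r p (n + 1) =
      (1 + 2 * r / ((n : ℝ) + 1 + t)) * wrrtB μ r p n
        + (2 * r * t / ((n : ℝ) + 1 + t)) * wrrtA μ r p n + 1 := by
  have hr0 : (0:ℝ) < r := hr.1
  have hr1 : r < 1 := hr.2
  have habs : |r| ≤ 1 := by rw [abs_of_pos hr0]; exact hr1.le
  have hmt : (0:ℝ) < (n:ℝ) + 1 + t := by positivity
  -- integrability facts
  have intFB : Integrable (fun ω => wrrtFB r n (fun k => p k ω)) μ :=
    wrrt_integrable_of_local μ p hpmeas (n+1) _ (wrrtFB_local r n (Nat.lt_succ_self n)) _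
      (fun P => wrrtFB_bound habs n P)
  have intHV : ∀ v : Option ℕ, wrrtVLT v (n+1) →
      Integrable (fun ω => wrrtHV r n v (fun k => p k ω)) μ := fun v hv =>
    wrrt_integrable_of_local μ p hpmeas (n+1) _ (wrrtHV_local r n v hv (Nat.lt_succ_self n)) _
      (fun P => wrrtHV_bound habs n v P)
  have intF2 : Integrable (fun ω => wrrtHV r n (some (n+1)) (fun k => p k ω)) μ :=
    wrrt_integrable_of_local μ p hpmeas (n+2) _
      (wrrtHV_local r n (some (n+1)) (wrrtVLT_some (by omega)) (by omega)) _
      (fun P => wrrtHV_bound habs n (some (n+1)) P)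
  have intProd : ∀ v : Option ℕ, wrrtVLT v (n+1) →
      Integrable (fun ω => wrrtInd (n+1) v (p (n+1) ω) * wrrtHV r n v (fun k => p k ω)) μ := by
    intro v hv
    have hloc : ∀ P Q : ℕ → Option ℕ, (∀ k < n+2, P k = Q k) →
        wrrtInd (n+1) v (P (n+1)) * wrrtHV r n v P
          = wrrtInd (n+1) v (Q (n+1)) * wrrtHV r n v Q := by
      intro P Q H
      rw [H (n+1) (by omega),
        wrrtHV_local r n v hv (Nat.lt_succ_self n) P Q (fun k hk => H k (by omega))]
    have hbd : ∀ P : ℕ → Option ℕ,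
        |wrrtInd (n+1) v (P (n+1)) * wrrtHV r n v P| ≤ (n : ℝ) + 1 := by
      intro P
      rw [abs_mul]
      calc |wrrtInd (n+1) v (P (n+1))| * |wrrtHV r n v P|
          ≤ 1 * ((n:ℝ) + 1) :=
            mul_le_mul (wrrtInd_bound _ _ _) (wrrtHV_bound habs n v P) (abs_nonneg _)
              zero_le_one
        _ = (n:ℝ) + 1 := one_mul _
    exact wrrt_integrable_of_local μ p hpmeas (n+2)
      (fun P => wrrtInd (n+1) v (P (n+1)) * wrrtHV r n v P) hloc _ hbd
  have intInd : ∀ v : Option ℕ, Integrable (fun ω => wrrtInd (n+1) v (p (n+1) ω)) μ := by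
    intro v
    refine ⟨((measurable_of_countable (wrrtInd (n+1) v)).comp (hpmeas (n+1))).aestronglyMeasurable,
      MeasureTheory.HasFiniteIntegral.of_bounded (C := 1) (Filter.Eventually.of_forall fun ω => ?_)⟩
    rw [Real.norm_eq_abs]
    exact wrrtInd_bound _ _ _
  -- integral of indicator
  have hIntInd : ∀ v : Option ℕ, ∫ ω, wrrtInd (n+1) v (p (n+1) ω) ∂μ
      = (μ {ω | wrrtPhi (n+1) (p (n+1) ω) = v}).toReal := by
    intro v
    have hms : MeasurableSet {ω | wrrtPhi (n+1) (p (n+1) ω) = v} := by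
      have : {ω | wrrtPhi (n+1) (p (n+1) ω) = v} = (p (n+1)) ⁻¹' {o | wrrtPhi (n+1) o = v} := rfl
      rw [this]
      exact hpmeas (n+1) (MeasurableSpace.measurableSet_top)
    have heq : (fun ω => wrrtInd (n+1) v (p (n+1) ω))
        = Set.indicator {ω | wrrtPhi (n+1) (p (n+1) ω) = v} (fun _ => (1:ℝ)) := by
      funext ω
      rw [Set.indicator_apply]
      by_cases h : wrrtPhi (n+1) (p (n+1) ω) = v
      · simp [wrrtInd, h, Set.mem_setOf_eq]
      · simp [wrrtInd, h, Set.mem_setOf_eq]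
    rw [heq, integral_indicator_const (1:ℝ) hms, smul_eq_mul, mul_one, measureReal_def]
  -- product formula via independence
  have hprod : ∀ v : Option ℕ, wrrtVLT v (n+1) →
      ∫ ω, wrrtInd (n+1) v (p (n+1) ω) * wrrtHV r n v (fun k => p k ω) ∂μ
        = (μ {ω | wrrtPhi (n+1) (p (n+1) ω) = v}).toReal
          * ∫ ω, wrrtHV r n v (fun k => p k ω) ∂μ := by
    intro v hv
    have hindepv := wrrt_indep_of_local μ p hpmeas hindep (n+1) (wrrtInd (n+1) v)
      (wrrtHV r n v) (wrrtHV_local r n v hv (Nat.lt_succ_self n))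
    have hmul := hindepv.integral_mul_eq_mul_integral (intInd v).aestronglyMeasurable
      (intHV v hv).aestronglyMeasurable
    rw [← hIntInd v]
    simpa [Pi.mul_apply] using hmul
  -- pointwise step 1
  have hsq : ∀ (f : ℕ → ℕ → ℝ) (m : ℕ),
      (∑ u ∈ Finset.range (m+1), ∑ w ∈ Finset.range (m+1), f u w)
        = (∑ u ∈ Finset.range m, ∑ w ∈ Finset.range m, f u w)
          + (∑ u ∈ Finset.range m, f u m) + (∑ w ∈ Finset.range m, f m w) + f m m := by
    intro f m
    rw [Finset.sum_range_succ, Finset.sum_range_succ]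
    rw [Finset.sum_congr rfl (fun u (_ : u ∈ Finset.range m) => Finset.sum_range_succ (f u) m),
      Finset.sum_add_distrib]
    ring
  have step1 : ∀ ω, (∑ u ∈ Finset.range (n+1+1), ∑ w ∈ Finset.range (n+1+1),
      r ^ wrrtDist (fun k => p k ω) (some u) (some w))
      = wrrtFB r n (fun k => p k ω)
        + (2 * wrrtHV r n (some (n+1)) (fun k => p k ω) + 1) := by
    intro ω
    rw [hsq (fun u w => r ^ wrrtDist (fun k => p k ω) (some u) (some w)) (n+1)]
    have hcomm : (∑ w ∈ Finset.range (n+1),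
          r ^ wrrtDist (fun k => p k ω) (some (n+1)) (some w))
        = ∑ w ∈ Finset.range (n+1), r ^ wrrtDist (fun k => p k ω) (some w) (some (n+1)) :=
      Finset.sum_congr rfl fun w _ => by rw [wrrt_dist_comm]
    rw [hcomm, wrrt_dist_self, pow_zero]
    simp only [wrrtFB, wrrtHV]
    ring
  -- pointwise step 2
  have step2 : ∀ ω, wrrtHV r n (some (n+1)) (fun k => p k ω)
      = r * (wrrtInd (n+1) none (p (n+1) ω) * wrrtHV r n none (fun k => p k ω)
        + ∑ j ∈ Finset.range (n+1),
            wrrtInd (n+1) (some j) (p (n+1) ω) * wrrtHV r n (some j) (fun k => p k ω)) := by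
    intro ω
    have hstep : ∀ u ∈ Finset.range (n+1),
        r ^ wrrtDist (fun k => p k ω) (some u) (some (n+1))
          = r * r ^ wrrtDist (fun k => p k ω) (some u) (wrrtPhi (n+1) (p (n+1) ω)) := by
      intro u hu
      rw [wrrt_dist_step_leaf (fun k => p k ω) (n+1) (some u)
        (wrrtVLT_some (Finset.mem_range.mp hu)), wrrt_parent_eq_phi, pow_succ']
    rw [wrrtHV, Finset.sum_congr rfl hstep, ← Finset.mul_sum]
    congr 1
    rcases hv : wrrtPhi (n+1) (p (n+1) ω) with _ | j
    · rw [show wrrtInd (n+1) none (p (n+1) ω) = 1 from by rw [wrrtInd, hv]; simp, one_mul]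
      have hz : ∀ x ∈ Finset.range (n+1),
          wrrtInd (n+1) (some x) (p (n+1) ω) * wrrtHV r n (some x) (fun k => p k ω) = 0 := by
        intro x _
        rw [show wrrtInd (n+1) (some x) (p (n+1) ω) = 0 from by rw [wrrtInd, hv]; simp, zero_mul]
      rw [Finset.sum_congr rfl hz, Finset.sum_const_zero, add_zero, wrrtHV]
    · have hj : j < n + 1 := wrrtPhi_some_lt hv
      rw [show wrrtInd (n+1) none (p (n+1) ω) = 0 from by rw [wrrtInd, hv]; simp,
        zero_mul, zero_add]
      have hsum : (∑ x ∈ Finset.range (n+1),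
          wrrtInd (n+1) (some x) (p (n+1) ω) * wrrtHV r n (some x) (fun k => p k ω))
          = wrrtHV r n (some j) (fun k => p k ω) := by
        rw [Finset.sum_eq_single j (fun j' _ hne => by
            rw [show wrrtInd (n+1) (some j') (p (n+1) ω) = 0 from by
              rw [wrrtInd, hv]; simp [(Ne.symm hne)], zero_mul])
          (fun h => absurd (Finset.mem_range.mpr hj) h)]
        rw [show wrrtInd (n+1) (some j) (p (n+1) ω) = 1 from by rw [wrrtInd, hv]; simp, one_mul]
      rw [hsum, wrrtHV]
  -- A and B as integrals of functionals
  have hAdef : wrrtA μ r p n = ∫ ω, wrrtHV r n none (fun k => p k ω) ∂μ := by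
    rw [wrrtA]
    congr 1
    funext ω
    rw [wrrtHV]
    refine Finset.sum_congr rfl fun u _ => ?_
    rw [wrrt_dist_none]
    rfl
  have hBdef : ∀ m : ℕ, wrrtB μ r p m = ∫ ω, wrrtFB r m (fun k => p k ω) ∂μ := fun m => rfl
  have hsumHV : ∑ j ∈ Finset.range (n+1), ∫ ω, wrrtHV r n (some j) (fun k => p k ω) ∂μ
      = wrrtB μ r p n := by
    rw [← integral_finset_sum _ (fun j hj => intHV (some j) (wrrtVLT_some (Finset.mem_range.mp hj)))]
    rw [wrrtB]
    congr 1
    funext ω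
    simp only [wrrtHV]
    exact Finset.sum_comm
  -- measure values
  have hcast : ((n+1 : ℕ) : ℝ) = (n:ℝ) + 1 := by push_cast; ring
  have hmeasnone : (μ {ω | wrrtPhi (n+1) (p (n+1) ω) = none}).toReal = t / ((n:ℝ) + 1 + t) := by
    rw [wrrt_measure_phi_none μ t p hpmeas ht hroot hparent (n+1), hcast,
      ENNReal.toReal_ofReal (by positivity)]
  have hmeassome : ∀ j, j < n + 1 →
      (μ {ω | wrrtPhi (n+1) (p (n+1) ω) = some j}).toReal = 1 / ((n:ℝ) + 1 + t) := by
    intro j hj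
    rw [wrrt_measure_phi_some μ t p hparent (n+1) j hj, hcast,
      ENNReal.toReal_ofReal (by positivity)]
  -- integral of the new-vertex column
  have hF2int : ∫ ω, wrrtHV r n (some (n+1)) (fun k => p k ω) ∂μ
      = r * ((t / ((n:ℝ) + 1 + t)) * wrrtA μ r p n
          + (1 / ((n:ℝ) + 1 + t)) * wrrtB μ r p n) := by
    rw [show (fun ω => wrrtHV r n (some (n+1)) (fun k => p k ω))
        = fun ω => r * (wrrtInd (n+1) none (p (n+1) ω) * wrrtHV r n none (fun k => p k ω)
          + ∑ j ∈ Finset.range (n+1),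
              wrrtInd (n+1) (some j) (p (n+1) ω) * wrrtHV r n (some j) (fun k => p k ω))
      from funext step2]
    rw [integral_const_mul]
    congr 1
    rw [integral_add (intProd none (wrrtVLT_none _))
      (integrable_finset_sum _ (fun j hj => intProd (some j) (wrrtVLT_some (Finset.mem_range.mp hj)))),
      integral_finset_sum _ (fun j hj => intProd (some j) (wrrtVLT_some (Finset.mem_range.mp hj)))]
    rw [hprod none (wrrtVLT_none _), hmeasnone, ← hAdef]
    congr 1
    rw [Finset.sum_congr rfl (fun j hj => by
      rw [hprod (some j) (wrrtVLT_some (Finset.mem_range.mp hj)),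
        hmeassome j (Finset.mem_range.mp hj)])]
    rw [← Finset.mul_sum, hsumHV]
  -- assemble
  have int2 : Integrable (fun ω => 2 * wrrtHV r n (some (n+1)) (fun k => p k ω) + 1) μ :=
    (intF2.const_mul 2).add (integrable_const 1)
  have hB1 : wrrtB μ r p (n+1)
      = wrrtB μ r p n + (2 * (∫ ω, wrrtHV r n (some (n+1)) (fun k => p k ω) ∂μ) + 1) := by
    rw [hBdef (n+1)]
    rw [show (fun ω => wrrtFB r (n+1) (fun k => p k ω))
      = fun ω => wrrtFB r n (fun k => p k ω)
          + (2 * wrrtHV r n (some (n+1)) (fun k => p k ω) + 1) from funext step1]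
    rw [integral_add intFB int2,
      integral_add (intF2.const_mul 2) (integrable_const 1), integral_const_mul,
      integral_const, probReal_univ, ← hBdef n]
    simp
  rw [hB1, hF2int]
  field_simp
  ring

end Recursion
/-- **Equation (3.13).** The closed form for `B_n(r)`: with the convention `A_{-1} = 0`,
`B_n(r) = ∑_{k=0}^n [1 + (2rt/(k+t)) A_{k-1}(r)] ∏_{j=k+1}^n (1 + 2r/(j+t))`. -/
theorem wrrt_B_closed_form
    {Ω : Type*} [MeasurableSpace Ω] (μ : Measure Ω) [IsProbabilityMeasure μ]
    (t r : ℝ) (ht : 0 < t) (hr : r ∈ Set.Ioo (0 : ℝ) 1)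
    -- `p n` is the (random) parent of the vertex `w n` of the weighted random
    -- recursive tree with root weight `t`:
    (p : ℕ → Ω → Option ℕ) (hpmeas : ∀ n, Measurable (p n))
    (hroot : ∀ n : ℕ, μ {ω | p n ω = none} = ENNReal.ofReal (t / (n + t)))
    (hparent : ∀ n : ℕ, ∀ j < n, μ {ω | p n ω = some j} = ENNReal.ofReal (1 / (n + t)))
    (hindep : iIndepFun (m := fun _ : ℕ => (inferInstance : MeasurableSpace (Option ℕ))) p μ)
    :
    ∀ n : ℕ,
      wrrtB μ r p n =
        ∑ k ∈ Finset.range (n + 1),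
          (1 + (2 * r * t / ((k : ℝ) + t)) *
            (if k = 0 then 0 else wrrtA μ r p (k - 1))) *
          ∏ j ∈ Finset.Ioc k n, (1 + 2 * r / ((j : ℝ) + t)) := by
  intro n
  induction n with
  | zero =>
    have hB0 : wrrtB μ r p 0 = 1 := by
      rw [wrrtB]
      rw [show (fun ω : Ω => ∑ u ∈ Finset.range (0+1), ∑ w ∈ Finset.range (0+1),
          r ^ wrrtDist (fun k => p k ω) (some u) (some w)) = fun _ => (1:ℝ) from
        funext fun ω => by simp [Finset.sum_range_one, wrrt_dist_self]]
      simp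
    rw [hB0]
    simp [Finset.sum_range_one, Finset.Ioc_self]
  | succ n IH =>
    have hrec := wrrt_B_rec μ t r ht hr p hpmeas hroot hparent hindep n
    have hsplit : ∀ k ∈ Finset.range (n+1),
        (1 + (2 * r * t / ((k : ℝ) + t)) * (if k = 0 then 0 else wrrtA μ r p (k - 1))) *
          ∏ j ∈ Finset.Ioc k (n+1), (1 + 2 * r / ((j : ℝ) + t))
        = ((1 + (2 * r * t / ((k : ℝ) + t)) * (if k = 0 then 0 else wrrtA μ r p (k - 1))) *
            ∏ j ∈ Finset.Ioc k n, (1 + 2 * r / ((j : ℝ) + t)))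
          * (1 + 2 * r / (((n+1 : ℕ) : ℝ) + t)) := by
      intro k hk
      rw [Finset.prod_Ioc_succ_top (Nat.lt_succ_iff.mp (Finset.mem_range.mp hk))]
      ring
    rw [hrec, Finset.sum_range_succ, Finset.sum_congr rfl hsplit, ← Finset.sum_mul, ← IH,
      Finset.Ioc_self, Finset.prod_empty, mul_one]
    rw [show (if n + 1 = 0 then (0:ℝ) else wrrtA μ r p (n + 1 - 1)) = wrrtA μ r p n by
      norm_num]
    push_cast
    ring
end Congr
end
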